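/- Let (Ω, 𝔉, P) be a probability space, let φ be a probability measure on [0,1), and let X, Y be essentially bounded real-valued random variables. Then the spectral risk measure is subadditive: ρ^φ(X + Y) ≤ ρ^φ(X) + ρ^φ(Y). -/

import Mathlib

open MeasureTheory

/-- Value-at-risk at level `α` of the loss `X`: the `α`-quantile
`VaR_α(X) = inf {x : P(X ≤ x) ≥ α}`. -/
noncomputable def VaR {Ω : Type*} [MeasurableSpace Ω] (P : Measure Ω) (X : Ω → ℝ) (α : ℝ) : ℝ :=
  sInf {x : ℝ | α ≤ (P {ω | X ω ≤ x}).toReal}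

/-- Conditional value-at-risk: `CVaR_α(X) = (1-α)⁻¹ ∫_α^1 VaR_u(X) du`. -/
noncomputable def CVaR {Ω : Type*} [MeasurableSpace Ω] (P : Measure Ω) (X : Ω → ℝ) (α : ℝ) : ℝ :=
  (1 - α)⁻¹ * ∫ u in α..1, VaR P X u

/-- Spectral risk measure with spectrum `φ`: `ρ^φ(X) = ∫ CVaR_α(X) φ(dα)`. -/
noncomputable def spectralRisk {Ω : Type*} [MeasurableSpace Ω] (P : Measure Ω)
    (φ : Measure ℝ) (X : Ω → ℝ) : ℝ :=
  ∫ α, CVaR P X α ∂φ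

namespace SpectralAux

open Set ProbabilityTheory Filter Topology
open scoped ENNReal

set_option linter.unusedSectionVars false

/-- A bounded version of the quantile function of a measure `ν` on `ℝ`. -/
noncomputable def qf (ν : Measure ℝ) (M : ℝ) (u : ℝ) : ℝ :=
  sInf {x | -M ≤ x ∧ min u 1 ≤ cdf ν x}

section Quantile

variable {ν : Measure ℝ} [IsProbabilityMeasure ν] {M : ℝ}
  (hM : ν (Set.Icc (-M) M)ᶜ = 0)

include hM

lemma M_nonneg : 0 ≤ M := by
  by_contra h
  push_neg at h
  rw [Set.Icc_eq_empty (by intro hc; linarith [hc] : ¬(-M ≤ M)), Set.compl_empty,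
    measure_univ] at hM
  exact one_ne_zero hM

lemma cdf_M_eq_one : cdf ν M = 1 := by
  have h0 : ν (Set.Iic M)ᶜ = 0 := by
    refine measure_mono_null ?_ hM
    intro x hx
    simp only [Set.mem_compl_iff, Set.mem_Iic, not_le, Set.mem_Icc, not_and_or] at hx ⊢
    exact Or.inr hx
  have h1 : ν (Set.Iic M) = 1 := (prob_compl_eq_zero_iff measurableSet_Iic).1 h0
  rw [cdf_eq_real, measureReal_def, h1, ENNReal.toReal_one]

lemma le_of_cdf_pos {t : ℝ} (ht : 0 < cdf ν t) : -M ≤ t := by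
  by_contra h
  push_neg at h
  have h0 : ν (Set.Iic t) = 0 := by
    refine measure_mono_null ?_ hM
    intro x hx
    simp only [Set.mem_Iic] at hx
    simp only [Set.mem_compl_iff, Set.mem_Icc, not_and_or, not_le]
    exact Or.inl (by linarith)
  rw [cdf_eq_real, measureReal_def, h0, ENNReal.toReal_zero] at ht
  exact lt_irrefl 0 ht

lemma M_mem_qset (u : ℝ) : M ∈ {x | -M ≤ x ∧ min u 1 ≤ cdf ν x} := by
  refine ⟨by linarith [M_nonneg hM], ?_⟩
  rw [cdf_M_eq_one hM]
  exact min_le_right _ _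

lemma qset_nonempty (u : ℝ) : {x | -M ≤ x ∧ min u 1 ≤ cdf ν x}.Nonempty :=
  ⟨M, M_mem_qset hM u⟩

lemma qset_bddBelow (u : ℝ) : BddBelow {x | -M ≤ x ∧ min u 1 ≤ cdf ν x} :=
  ⟨-M, fun _ hx => hx.1⟩

lemma qf_mono : Monotone (qf ν M) := by
  intro u v huv
  exact csInf_le_csInf (qset_bddBelow hM u) (qset_nonempty hM v)
    (fun x hx => ⟨hx.1, le_trans (min_le_min huv le_rfl) hx.2⟩)

lemma qf_mem_Icc (u : ℝ) : qf ν M u ∈ Set.Icc (-M) M :=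
  ⟨le_csInf (qset_nonempty hM u) (fun _ hx => hx.1),
   csInf_le (qset_bddBelow hM u) (M_mem_qset hM u)⟩

lemma qf_abs_le (u : ℝ) : |qf ν M u| ≤ M := by
  have h := qf_mem_Icc hM u
  rw [abs_le]
  exact ⟨h.1, h.2⟩

lemma qf_le_iff {u : ℝ} (hu : 0 < u) (hu1 : u ≤ 1) (t : ℝ) :
    qf ν M u ≤ t ↔ u ≤ cdf ν t := by
  have hmin : min u 1 = u := min_eq_left hu1
  constructor
  · intro h
    have hev : ∀ᶠ s in nhdsWithin t (Set.Ioi t), u ≤ cdf ν s := by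
      refine Filter.eventually_of_mem self_mem_nhdsWithin (fun s hs => ?_)
      have hlt : qf ν M u < s := lt_of_le_of_lt h hs
      obtain ⟨x, hx, hxs⟩ := (csInf_lt_iff (qset_bddBelow hM u) (qset_nonempty hM u)).1 hlt
      calc u = min u 1 := hmin.symm
        _ ≤ cdf ν x := hx.2
        _ ≤ cdf ν s := (monotone_cdf ν) hxs.le
    have htend : Filter.Tendsto (cdf ν) (nhdsWithin t (Set.Ioi t)) (nhds (cdf ν t)) :=
      ((cdf ν).right_continuous t).mono_left (nhdsWithin_mono t Set.Ioi_subset_Ici_self)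
    exact ge_of_tendsto htend hev
  · intro h
    have htM : -M ≤ t := le_of_cdf_pos hM (lt_of_lt_of_le hu h)
    exact csInf_le (qset_bddBelow hM u) ⟨htM, hmin.le.trans h⟩

lemma qf_measurable : Measurable (qf ν M) := (qf_mono hM).measurable

lemma map_qf : (volume.restrict (Set.Ioo (0:ℝ) 1)).map (qf ν M) = ν := by
  haveI : IsProbabilityMeasure (volume.restrict (Set.Ioo (0:ℝ) 1)) := by
    constructor
    rw [Measure.restrict_apply_univ, Real.volume_Ioo]
    norm_num
  haveI : IsProbabilityMeasure ((volume.restrict (Set.Ioo (0:ℝ) 1)).map (qf ν M)) :=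
    Measure.isProbabilityMeasure_map (qf_measurable hM).aemeasurable
  refine Measure.ext_of_Iic _ _ (fun t => ?_)
  rw [Measure.map_apply (qf_measurable hM) measurableSet_Iic,
    Measure.restrict_apply ((qf_measurable hM) measurableSet_Iic)]
  have hset : qf ν M ⁻¹' Set.Iic t ∩ Set.Ioo 0 1 = Set.Iic (cdf ν t) ∩ Set.Ioo 0 1 := by
    ext u
    simp only [Set.mem_inter_iff, Set.mem_preimage, Set.mem_Iic, Set.mem_Ioo]
    constructor
    · rintro ⟨h, hu⟩
      exact ⟨(qf_le_iff hM hu.1 hu.2.le t).1 h, hu⟩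
    · rintro ⟨h, hu⟩
      exact ⟨(qf_le_iff hM hu.1 hu.2.le t).2 h, hu⟩
  rw [hset, ← ofReal_cdf ν t]
  have h0 : 0 ≤ cdf ν t := cdf_nonneg ν t
  have h1 : cdf ν t ≤ 1 := cdf_le_one ν t
  rcases lt_or_ge (cdf ν t) 1 with hc | hc
  · have heq : Set.Iic (cdf ν t) ∩ Set.Ioo 0 1 = Set.Ioc 0 (cdf ν t) := by
      ext u
      simp only [Set.mem_inter_iff, Set.mem_Iic, Set.mem_Ioo, Set.mem_Ioc]
      constructor
      · rintro ⟨h, hu⟩; exact ⟨hu.1, h⟩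
      · rintro ⟨hu, h⟩; exact ⟨h, hu, lt_of_le_of_lt h hc⟩
    rw [heq, Real.volume_Ioc, sub_zero]
  · have hc1 : cdf ν t = 1 := le_antisymm h1 hc
    have heq : Set.Iic (cdf ν t) ∩ Set.Ioo 0 1 = Set.Ioo 0 1 := by
      rw [Set.inter_eq_right]
      intro u hu
      simp only [Set.mem_Iic]
      rw [hc1]
      exact hu.2.le
    rw [heq, Real.volume_Ioo, hc1]
    norm_num

lemma integral_comp_qf {f : ℝ → ℝ} (hf : Continuous f) :
    ∫ u in Set.Ioc (0:ℝ) 1, f (qf ν M u) = ∫ x, f x ∂ν := by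
  rw [← Measure.restrict_congr_set Ioo_ae_eq_Ioc,
    ← MeasureTheory.integral_map (qf_measurable hM).aemeasurable
      hf.aestronglyMeasurable, map_qf hM]

end Quantile

lemma integrableOn_of_bounded {f : ℝ → ℝ} {s : Set ℝ} (hs : volume s ≠ ⊤)
    (hf : Measurable f) {C : ℝ} (h : ∀ u, |f u| ≤ C) : IntegrableOn f s := by
  haveI : IsFiniteMeasure (volume.restrict s) :=
    ⟨by rwa [Measure.restrict_apply_univ, lt_top_iff_ne_top]⟩
  exact Integrable.mono' (integrable_const C) hf.aestronglyMeasurable.restrict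
    (Filter.Eventually.of_forall h)

section RV

variable {Ω : Type*} [MeasurableSpace Ω] {P : Measure Ω} [IsProbabilityMeasure P]
  {X : Ω → ℝ} (hXm : AEMeasurable X P) {M : ℝ} (hMX : ∀ᵐ ω ∂P, |X ω| ≤ M)

include hXm hMX

lemma map_bound : (P.map X) (Set.Icc (-M) M)ᶜ = 0 := by
  rw [Measure.map_apply_of_aemeasurable hXm measurableSet_Icc.compl]
  rw [MeasureTheory.ae_iff] at hMX
  refine measure_mono_null (fun ω hω => ?_) hMX
  simp only [Set.mem_preimage, Set.mem_compl_iff, Set.mem_Icc, ← abs_le] at hω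
  exact hω

lemma cdf_apply (x : ℝ) :
    haveI : IsProbabilityMeasure (P.map X) := Measure.isProbabilityMeasure_map hXm
    (P {ω | X ω ≤ x}).toReal = cdf (P.map X) x := by
  haveI : IsProbabilityMeasure (P.map X) := Measure.isProbabilityMeasure_map hXm
  rw [cdf_eq_real, measureReal_def, Measure.map_apply_of_aemeasurable hXm measurableSet_Iic]
  rfl

lemma VaR_eq_qf {u : ℝ} (hu : u ∈ Set.Ioc (0:ℝ) 1) :
    VaR P X u = qf (P.map X) M u := by
  haveI : IsProbabilityMeasure (P.map X) := Measure.isProbabilityMeasure_map hXm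
  unfold VaR qf
  congr 1
  ext x
  simp only [Set.mem_setOf_eq, cdf_apply hXm hMX]
  constructor
  · intro h
    exact ⟨le_of_cdf_pos (map_bound hXm hMX) (lt_of_lt_of_le hu.1 h),
      (min_eq_left hu.2).le.trans h⟩
  · rintro ⟨_, h2⟩
    rw [min_eq_left hu.2] at h2
    exact h2

lemma VaR_nonpos {u : ℝ} (hu : u ≤ 0) : VaR P X u = 0 := by
  unfold VaR
  have hset : {x : ℝ | u ≤ (P {ω | X ω ≤ x}).toReal} = Set.univ := by
    ext x
    simp only [Set.mem_setOf_eq, Set.mem_univ, iff_true]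
    exact le_trans hu ENNReal.toReal_nonneg
  rw [hset]
  refine Real.sInf_of_not_bddBelow ?_
  rintro ⟨c, hc⟩
  have h1 := hc (Set.mem_univ (c - 1))
  linarith

lemma VaR_gt_one {u : ℝ} (hu : 1 < u) : VaR P X u = 0 := by
  unfold VaR
  have hset : {x : ℝ | u ≤ (P {ω | X ω ≤ x}).toReal} = (∅ : Set ℝ) := by
    ext x
    simp only [Set.mem_setOf_eq, Set.mem_empty_iff_false, iff_false, not_le]
    calc (P {ω | X ω ≤ x}).toReal ≤ (1 : ENNReal).toReal :=
          ENNReal.toReal_mono ENNReal.one_ne_top prob_le_one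
      _ = 1 := ENNReal.toReal_one
      _ < u := hu
  rw [hset]
  exact Real.sInf_empty

lemma VaR_abs_le (u : ℝ) : |VaR P X u| ≤ M := by
  haveI : IsProbabilityMeasure (P.map X) := Measure.isProbabilityMeasure_map hXm
  have hMnn : 0 ≤ M := M_nonneg (map_bound hXm hMX)
  rcases le_or_gt u 0 with h | h
  · rw [VaR_nonpos hXm hMX h, abs_zero]; exact hMnn
  rcases le_or_gt u 1 with h1 | h1
  · rw [VaR_eq_qf hXm hMX ⟨h, h1⟩]
    exact qf_abs_le (map_bound hXm hMX) u
  · rw [VaR_gt_one hXm hMX h1, abs_zero]; exact hMnn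

lemma VaR_measurable : Measurable (VaR P X) := by
  haveI : IsProbabilityMeasure (P.map X) := Measure.isProbabilityMeasure_map hXm
  have heq : VaR P X = fun u =>
      if u ∈ Set.Ioc (0:ℝ) 1 then qf (P.map X) M u else 0 := by
    funext u
    by_cases hu : u ∈ Set.Ioc (0:ℝ) 1
    · rw [if_pos hu, VaR_eq_qf hXm hMX hu]
    · rw [if_neg hu]
      simp only [Set.mem_Ioc, not_and_or, not_lt, not_le] at hu
      rcases hu with h | h
      · exact VaR_nonpos hXm hMX h
      · exact VaR_gt_one hXm hMX h
  rw [heq]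
  exact Measurable.ite measurableSet_Ioc (qf_measurable (map_bound hXm hMX)) measurable_const

lemma VaR_intervalIntegrable (a b : ℝ) : IntervalIntegrable (VaR P X) volume a b := by
  rw [intervalIntegrable_iff]
  exact integrableOn_of_bounded measure_Ioc_lt_top.ne (VaR_measurable hXm hMX)
    (VaR_abs_le hXm hMX)

lemma integrable_posPart (c : ℝ) : Integrable (fun ω => max (X ω - c) 0) P := by
  have hXi : Integrable X P :=
    Integrable.mono' (integrable_const M) hXm.aestronglyMeasurable
      (hMX.mono fun ω h => by rwa [Real.norm_eq_abs])
  exact (hXi.sub (integrable_const c)).pos_part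

lemma lemA (c : ℝ) :
    ∫ u in Set.Ioc (0:ℝ) 1, max (qf (P.map X) M u - c) 0 = ∫ ω, max (X ω - c) 0 ∂P := by
  haveI : IsProbabilityMeasure (P.map X) := Measure.isProbabilityMeasure_map hXm
  have hf : Continuous (fun x : ℝ => max (x - c) 0) :=
    (continuous_id.sub continuous_const).max continuous_const
  rw [integral_comp_qf (map_bound hXm hMX) hf,
    MeasureTheory.integral_map hXm hf.aestronglyMeasurable]

lemma qf_integrableOn_Ioc (a b : ℝ) :
    IntegrableOn (qf (P.map X) M) (Set.Ioc a b) := by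
  haveI : IsProbabilityMeasure (P.map X) := Measure.isProbabilityMeasure_map hXm
  exact integrableOn_of_bounded measure_Ioc_lt_top.ne (qf_measurable (map_bound hXm hMX))
    (qf_abs_le (map_bound hXm hMX))

lemma qf_max_integrableOn_Ioc (c a b : ℝ) :
    IntegrableOn (fun u => max (qf (P.map X) M u - c) 0) (Set.Ioc a b) := by
  haveI : IsProbabilityMeasure (P.map X) := Measure.isProbabilityMeasure_map hXm
  refine integrableOn_of_bounded measure_Ioc_lt_top.ne
    (((qf_measurable (map_bound hXm hMX)).sub measurable_const).max measurable_const)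
    (C := M + |c|) (fun u => ?_)
  have h1 := abs_le.1 (qf_abs_le (map_bound hXm hMX) u)
  have hMnn : 0 ≤ M := M_nonneg (map_bound hXm hMX)
  have h2 : (0:ℝ) ≤ M + |c| := add_nonneg hMnn (abs_nonneg c)
  have hc := neg_abs_le c
  rw [abs_le]
  constructor
  · linarith [le_max_right (qf (P.map X) M u - c) 0]
  · exact max_le (by linarith) h2

lemma lemB {α : ℝ} (hα : α ∈ Set.Ico (0:ℝ) 1) :
    ∫ ω, max (X ω - qf (P.map X) M α) 0 ∂P
      = (∫ u in Set.Ioc α 1, qf (P.map X) M u) - (1 - α) * qf (P.map X) M α := by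
  haveI : IsProbabilityMeasure (P.map X) := Measure.isProbabilityMeasure_map hXm
  set c₀ := qf (P.map X) M α with hc₀
  have hmono := qf_mono (ν := P.map X) (map_bound hXm hMX)
  rw [← lemA hXm hMX c₀]
  have hsplit : Set.Ioc (0:ℝ) 1 = Set.Ioc 0 α ∪ Set.Ioc α 1 :=
    (Set.Ioc_union_Ioc_eq_Ioc hα.1 hα.2.le).symm
  rw [hsplit, setIntegral_union (Set.Ioc_disjoint_Ioc_of_le le_rfl) measurableSet_Ioc
    (qf_max_integrableOn_Ioc hXm hMX c₀ 0 α) (qf_max_integrableOn_Ioc hXm hMX c₀ α 1)]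
  have h1 : ∫ u in Set.Ioc (0:ℝ) α, max (qf (P.map X) M u - c₀) 0 = 0 := by
    rw [setIntegral_congr_fun measurableSet_Ioc
      (g := fun _ => (0:ℝ)) (fun u hu => by
        have : qf (P.map X) M u ≤ c₀ := hmono hu.2
        simp only
        rw [max_eq_right (by linarith)])]
    simp
  have h2 : ∫ u in Set.Ioc α 1, max (qf (P.map X) M u - c₀) 0
      = (∫ u in Set.Ioc α 1, qf (P.map X) M u) - (1 - α) * c₀ := by
    rw [setIntegral_congr_fun measurableSet_Ioc
      (g := fun u => qf (P.map X) M u - c₀) (fun u hu => by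
        have : c₀ ≤ qf (P.map X) M u := hmono hu.1.le
        simp only
        rw [max_eq_left (by linarith)])]
    rw [integral_sub (qf_integrableOn_Ioc hXm hMX α 1) (integrableOn_const measure_Ioc_lt_top.ne)]
    rw [setIntegral_const, measureReal_def, Real.volume_Ioc, ENNReal.toReal_ofReal (by linarith [hα.2] : (0:ℝ) ≤ 1 - α),
      smul_eq_mul]
  rw [h1, h2, zero_add]

lemma lemC {α : ℝ} (hα : α ∈ Set.Ico (0:ℝ) 1) (c : ℝ) :
    ∫ u in Set.Ioc α 1, qf (P.map X) M u
      ≤ (1 - α) * c + ∫ ω, max (X ω - c) 0 ∂P := by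
  haveI : IsProbabilityMeasure (P.map X) := Measure.isProbabilityMeasure_map hXm
  have step1 : ∫ u in Set.Ioc α 1, qf (P.map X) M u
      ≤ ∫ u in Set.Ioc α 1, (c + max (qf (P.map X) M u - c) 0) := by
    refine setIntegral_mono (qf_integrableOn_Ioc hXm hMX α 1)
      ((integrableOn_const measure_Ioc_lt_top.ne).add
        (qf_max_integrableOn_Ioc hXm hMX c α 1)) (fun u => ?_)
    have := le_max_left (qf (P.map X) M u - c) 0
    linarith
  have step2 : ∫ u in Set.Ioc α 1, (c + max (qf (P.map X) M u - c) 0)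
      = (1 - α) * c + ∫ u in Set.Ioc α 1, max (qf (P.map X) M u - c) 0 := by
    rw [integral_add (integrableOn_const (C := c) measure_Ioc_lt_top.ne)
      (qf_max_integrableOn_Ioc hXm hMX c α 1), setIntegral_const, measureReal_def, Real.volume_Ioc,
      ENNReal.toReal_ofReal (by linarith [hα.2] : (0:ℝ) ≤ 1 - α), smul_eq_mul]
  have step3 : ∫ u in Set.Ioc α 1, max (qf (P.map X) M u - c) 0
      ≤ ∫ u in Set.Ioc (0:ℝ) 1, max (qf (P.map X) M u - c) 0 := by
    refine setIntegral_mono_set (qf_max_integrableOn_Ioc hXm hMX c 0 1)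
      (Filter.Eventually.of_forall (fun u => le_max_right _ _))
      (HasSubset.Subset.eventuallyLE (Set.Ioc_subset_Ioc_left hα.1))
  calc ∫ u in Set.Ioc α 1, qf (P.map X) M u
      ≤ ∫ u in Set.Ioc α 1, (c + max (qf (P.map X) M u - c) 0) := step1
    _ = (1 - α) * c + ∫ u in Set.Ioc α 1, max (qf (P.map X) M u - c) 0 := step2
    _ ≤ (1 - α) * c + ∫ u in Set.Ioc (0:ℝ) 1, max (qf (P.map X) M u - c) 0 := by
        linarith [step3]
    _ = (1 - α) * c + ∫ ω, max (X ω - c) 0 ∂P := by rw [lemA hXm hMX c]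

lemma intervalIntegral_VaR_eq {α : ℝ} (hα : α ∈ Set.Ico (0:ℝ) 1) :
    ∫ u in α..1, VaR P X u = ∫ u in Set.Ioc α 1, qf (P.map X) M u := by
  rw [intervalIntegral.integral_of_le hα.2.le]
  refine setIntegral_congr_fun measurableSet_Ioc (fun u hu => ?_)
  exact VaR_eq_qf hXm hMX ⟨lt_of_le_of_lt hα.1 hu.1, hu.2⟩

end RV

lemma CVaR_subadd {Ω : Type*} [MeasurableSpace Ω] {P : Measure Ω} [IsProbabilityMeasure P]
    {X Y : Ω → ℝ} (hXm : AEMeasurable X P) (hYm : AEMeasurable Y P)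
    {MX MY : ℝ} (hMX : ∀ᵐ ω ∂P, |X ω| ≤ MX) (hMY : ∀ᵐ ω ∂P, |Y ω| ≤ MY)
    {α : ℝ} (hα : α ∈ Set.Ico (0:ℝ) 1) :
    CVaR P (fun ω => X ω + Y ω) α ≤ CVaR P X α + CVaR P Y α := by
  have hZm : AEMeasurable (fun ω => X ω + Y ω) P := hXm.add hYm
  have hMZ : ∀ᵐ ω ∂P, |X ω + Y ω| ≤ MX + MY := by
    filter_upwards [hMX, hMY] with ω h1 h2
    exact (abs_add_le _ _).trans (add_le_add h1 h2)
  set cX := qf (P.map X) MX α with hcX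
  set cY := qf (P.map Y) MY α with hcY
  have key : ∫ u in α..1, VaR P (fun ω => X ω + Y ω) u
      ≤ (∫ u in α..1, VaR P X u) + ∫ u in α..1, VaR P Y u := by
    rw [intervalIntegral_VaR_eq hZm hMZ hα, intervalIntegral_VaR_eq hXm hMX hα,
      intervalIntegral_VaR_eq hYm hMY hα]
    have step1 := lemC hZm hMZ hα (cX + cY)
    have step2 : ∫ ω, max (X ω + Y ω - (cX + cY)) 0 ∂P
        ≤ ∫ ω, (max (X ω - cX) 0 + max (Y ω - cY) 0) ∂P := by
      refine integral_mono (integrable_posPart hZm hMZ (cX + cY))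
        ((integrable_posPart hXm hMX cX).add (integrable_posPart hYm hMY cY)) (fun ω => ?_)
      refine max_le ?_ (add_nonneg (le_max_right _ _) (le_max_right _ _))
      linarith [le_max_left (X ω - cX) 0, le_max_left (Y ω - cY) 0]
    have step3 : ∫ ω, (max (X ω - cX) 0 + max (Y ω - cY) 0) ∂P
        = (∫ ω, max (X ω - cX) 0 ∂P) + ∫ ω, max (Y ω - cY) 0 ∂P :=
      integral_add (integrable_posPart hXm hMX cX) (integrable_posPart hYm hMY cY)
    have hBX := lemB hXm hMX hα
    have hBY := lemB hYm hMY hα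
    rw [← hcX] at hBX
    rw [← hcY] at hBY
    calc ∫ u in Set.Ioc α 1, qf (P.map (fun ω => X ω + Y ω)) (MX + MY) u
        ≤ (1 - α) * (cX + cY) + ∫ ω, max (X ω + Y ω - (cX + cY)) 0 ∂P := step1
      _ ≤ (1 - α) * (cX + cY) + ((∫ ω, max (X ω - cX) 0 ∂P) + ∫ ω, max (Y ω - cY) 0 ∂P) := by
          rw [← step3]; linarith [step2]
      _ = (∫ u in Set.Ioc α 1, qf (P.map X) MX u) + ∫ u in Set.Ioc α 1, qf (P.map Y) MY u := by
          rw [hBX, hBY]; ring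
  unfold CVaR
  rw [← mul_add]
  have h1α : (0:ℝ) < 1 - α := by linarith [hα.2]
  exact mul_le_mul_of_nonneg_left key (inv_nonneg.2 h1α.le)

lemma CVaR_measurable {Ω : Type*} [MeasurableSpace Ω] {P : Measure Ω} [IsProbabilityMeasure P]
    {X : Ω → ℝ} (hXm : AEMeasurable X P) {M : ℝ} (hMX : ∀ᵐ ω ∂P, |X ω| ≤ M) :
    Measurable (fun α => CVaR P X α) := by
  have hprim : Continuous (fun b => ∫ u in (1:ℝ)..b, VaR P X u) :=
    intervalIntegral.continuous_primitive (fun a b => VaR_intervalIntegrable hXm hMX a b) 1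
  have heq : (fun α => CVaR P X α)
      = fun α => (1 - α)⁻¹ * (-∫ u in (1:ℝ)..α, VaR P X u) := by
    funext α
    rw [CVaR, ← intervalIntegral.integral_symm]
  rw [heq]
  exact ((measurable_const.sub measurable_id').inv).mul hprim.measurable.neg

lemma CVaR_abs_le {Ω : Type*} [MeasurableSpace Ω] {P : Measure Ω} [IsProbabilityMeasure P]
    {X : Ω → ℝ} (hXm : AEMeasurable X P) {M : ℝ} (hMX : ∀ᵐ ω ∂P, |X ω| ≤ M)
    {α : ℝ} (hα : α ∈ Set.Ico (0:ℝ) 1) : |CVaR P X α| ≤ M := by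
  have h1α : (0:ℝ) < 1 - α := by linarith [hα.2]
  have hbound : ‖∫ u in α..1, VaR P X u‖ ≤ M * |1 - α| := by
    refine intervalIntegral.norm_integral_le_of_norm_le_const (fun u _ => ?_)
    rw [Real.norm_eq_abs]
    exact VaR_abs_le hXm hMX u
  rw [CVaR, abs_mul, abs_inv, abs_of_pos h1α]
  rw [abs_of_pos h1α] at hbound
  rw [Real.norm_eq_abs] at hbound
  calc (1 - α)⁻¹ * |∫ u in α..1, VaR P X u| ≤ (1 - α)⁻¹ * (M * (1 - α)) := by
        exact mul_le_mul_of_nonneg_left hbound (inv_nonneg.2 h1α.le)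
    _ = M := by field_simp

lemma CVaR_integrable {Ω : Type*} [MeasurableSpace Ω] {P : Measure Ω} [IsProbabilityMeasure P]
    {φ : Measure ℝ} [IsProbabilityMeasure φ] (hφ : φ (Set.Ico (0:ℝ) 1)ᶜ = 0)
    {X : Ω → ℝ} (hXm : AEMeasurable X P) {M : ℝ} (hMX : ∀ᵐ ω ∂P, |X ω| ≤ M) :
    Integrable (fun α => CVaR P X α) φ := by
  have hae : ∀ᵐ α ∂φ, α ∈ Set.Ico (0:ℝ) 1 := MeasureTheory.mem_ae_iff.2 hφ
  refine Integrable.mono' (integrable_const M)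
    (CVaR_measurable hXm hMX).aestronglyMeasurable ?_
  filter_upwards [hae] with α hα
  rw [Real.norm_eq_abs]
  exact CVaR_abs_le hXm hMX hα

end SpectralAux

/-- The spectral risk measure is subadditive: `ρ^φ(X+Y) ≤ ρ^φ(X) + ρ^φ(Y)`. -/
theorem spectralRisk_subadditive {Ω : Type*} [MeasurableSpace Ω] (P : Measure Ω)
    [IsProbabilityMeasure P] (φ : Measure ℝ) [IsProbabilityMeasure φ]
    (hφ : φ (Set.Ico (0:ℝ) 1)ᶜ = 0)
    (X Y : Ω → ℝ) (hX : MemLp X ⊤ P) (hY : MemLp Y ⊤ P) :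
    spectralRisk P φ (fun ω => X ω + Y ω) ≤ spectralRisk P φ X + spectralRisk P φ Y := by
  open SpectralAux in
  have hXm : AEMeasurable X P := hX.aestronglyMeasurable.aemeasurable
  have hYm : AEMeasurable Y P := hY.aestronglyMeasurable.aemeasurable
  have hbd : ∀ {W : Ω → ℝ}, MemLp W ⊤ P → ∀ᵐ ω ∂P, |W ω| ≤ (eLpNormEssSup W P).toReal := by
    intro W hW
    have hlt : eLpNormEssSup W P < ⊤ := by
      rw [← eLpNorm_exponent_top]
      exact hW.2
    filter_upwards [ae_le_eLpNormEssSup (f := W) (μ := P)] with ω hω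
    have h := ENNReal.toReal_mono hlt.ne hω
    rwa [toReal_enorm, Real.norm_eq_abs] at h
  set MX := (eLpNormEssSup X P).toReal
  set MY := (eLpNormEssSup Y P).toReal
  have hMX : ∀ᵐ ω ∂P, |X ω| ≤ MX := hbd hX
  have hMY : ∀ᵐ ω ∂P, |Y ω| ≤ MY := hbd hY
  have hZm : AEMeasurable (fun ω => X ω + Y ω) P := hXm.add hYm
  have hMZ : ∀ᵐ ω ∂P, |X ω + Y ω| ≤ MX + MY := by
    filter_upwards [hMX, hMY] with ω h1 h2
    exact (abs_add_le _ _).trans (add_le_add h1 h2)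
  have hae : ∀ᵐ α ∂φ, α ∈ Set.Ico (0:ℝ) 1 := MeasureTheory.mem_ae_iff.2 hφ
  have hiX := SpectralAux.CVaR_integrable hφ hXm hMX
  have hiY := SpectralAux.CVaR_integrable hφ hYm hMY
  have hiZ := SpectralAux.CVaR_integrable hφ hZm hMZ
  unfold spectralRisk
  rw [← integral_add hiX hiY]
  refine integral_mono_ae hiZ (hiX.add hiY) ?_
  filter_upwards [hae] with α hα
  exact SpectralAux.CVaR_subadd hXm hYm hMX hMY hα
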